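/- If T: X ⇉ X* is quasimonotone, then the set E_{T^ν} = {x ∈ X : V_{T^ν}(x) = ∅} contains at most one point. Moreover, if T is pre-maximal quasimonotone, then E_T = E_{T^ν}, and hence E_T contains at most one point. -/

import Mathlib

open NormedSpace

variable {X : Type*} [NormedAddCommGroup X] [NormedSpace ℝ X]

/-- quasimonotone relation: (x,x*) ∼q (y,y*) iff min{⟨y−x,x*⟩, ⟨x−y,y*⟩} ≤ 0 -/
def qrel (p q : X × StrongDual ℝ X) : Prop :=
  min (p.2 (q.1 - p.1)) (q.2 (p.1 - q.1)) ≤ 0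

/-- quasimonotone polar -/
def qpolar (T : Set (X × StrongDual ℝ X)) : Set (X × StrongDual ℝ X) :=
  {p | ∀ q ∈ T, qrel p q}

/-- imagewise conic hull of an operator -/
def coneOp (T : Set (X × StrongDual ℝ X)) : Set (X × StrongDual ℝ X) :=
  {p | ∃ t : ℝ, 0 ≤ t ∧ ∃ v, (p.1, v) ∈ T ∧ p.2 = t • v}

def QuasiMono (T : Set (X × StrongDual ℝ X)) : Prop := ∀ p ∈ T, ∀ q ∈ T, qrel p q

def MaxQuasiMono (T : Set (X × StrongDual ℝ X)) : Prop :=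
  QuasiMono T ∧ ∀ S, QuasiMono S → T ⊆ S → S = T

def Vset (T : Set (X × StrongDual ℝ X)) (x : X) : Set X :=
  {y | ∃ y' : StrongDual ℝ X, (y, y') ∈ T ∧ 0 < y' (x - y)}

/-- the image T^ν(x) of the quasimonotone polar -/
def polarIm (T : Set (X × StrongDual ℝ X)) (x : X) : Set (StrongDual ℝ X) :=
  {x' | (x, x') ∈ qpolar T}

/-- normal cone of C at x (no convexity or membership assumed) -/
def normalCone (C : Set X) (x : X) : Set (StrongDual ℝ X) :=
  {x' | ∀ y ∈ C, x' (y - x) ≤ 0}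

def im (T : Set (X × StrongDual ℝ X)) (x : X) : Set (StrongDual ℝ X) := {v | (x, v) ∈ T}

/-- effective domain: T(u) nonempty and ≠ {0} -/
def edom (T : Set (X × StrongDual ℝ X)) : Set X :=
  {u | (im T u).Nonempty ∧ im T u ≠ {0}}

/-- conic hull of a set in the dual -/
def coneSet (A : Set (StrongDual ℝ X)) : Set (StrongDual ℝ X) :=
  {v | ∃ t : ℝ, 0 ≤ t ∧ ∃ a ∈ A, v = t • a}

def Eset (T : Set (X × StrongDual ℝ X)) : Set X := {x | Vset T x = ∅}

/-- solution set of the Minty variational inequality for S on K -/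
def Minty (S : Set (X × StrongDual ℝ X)) (K : Set X) : Set X :=
  {x ∈ K | ∀ q ∈ S, q.1 ∈ K → q.2 (x - q.1) ≤ 0}

def AEMaxQuasiMono (T : Set (X × StrongDual ℝ X)) : Prop :=
  QuasiMono T ∧ ∀ S, QuasiMono S → (∀ x ∈ edom T, im T x ⊆ coneSet (im S x)) →
    (∀ x ∈ edom T, coneSet (im T x) = coneSet (im S x)) ∧ edom T = edom S

theorem stmt18 [CompleteSpace X] (T : Set (X × StrongDual ℝ X)) (hT : QuasiMono T) :
    (Eset (qpolar T)).Subsingleton ∧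
    (QuasiMono (qpolar T) → Eset T = Eset (qpolar T) ∧ (Eset T).Subsingleton) := by

  -- T is contained in its quasimonotone polar
  have hsub : T ⊆ qpolar T := fun p hp q hq => hT p hp q hq
  -- if Vset T x = ∅ then (x, v) ∈ qpolar T for every v
  have key : ∀ x : X, Vset T x = ∅ → ∀ v : StrongDual ℝ X, (x, v) ∈ qpolar T := by
    intro x hx v q hq
    have h1 : ¬ (0 < q.2 (x - q.1)) := by
      intro h
      have : q.1 ∈ Vset T x := ⟨q.2, hq, h⟩
      rw [hx] at this
      exact this
    exact min_le_right _ _ |>.trans (not_lt.mp h1)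
  -- Eset (qpolar T) ⊆ Eset T
  have hE : ∀ x ∈ Eset (qpolar T), Vset T x = ∅ := by
    intro x hx
    rw [Set.eq_empty_iff_forall_notMem]
    intro y ⟨y', hy', hpos⟩
    have : y ∈ Vset (qpolar T) x := ⟨y', hsub hy', hpos⟩
    rw [Set.mem_setOf_eq.mp hx] at this
    exact this
  have hsing : (Eset (qpolar T)).Subsingleton := by
    intro x hx y hy
    by_contra hne
    have hxy : x - y ≠ 0 := sub_ne_zero.mpr hne
    obtain ⟨g, -, hg⟩ := exists_dual_vector ℝ (x - y) (norm_ne_zero_iff.mpr hxy)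
    have hgpos : 0 < g (x - y) := by
      rw [hg]
      exact norm_pos_iff.mpr hxy
    have hyq : (y, g) ∈ qpolar T := key y (hE y hy) g
    have : y ∈ Vset (qpolar T) x := ⟨g, hyq, hgpos⟩
    rw [Set.mem_setOf_eq.mp hx] at this
    exact this
  refine ⟨hsing, fun hQ => ?_⟩
  have heq : Eset T = Eset (qpolar T) := by
    ext x
    constructor
    · intro hx
      rw [Eset, Set.mem_setOf_eq, Set.eq_empty_iff_forall_notMem]
      intro y ⟨y', hy', hpos⟩
      have hne : y - x ≠ 0 := by
        intro h
        rw [sub_eq_zero] at h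
        subst h
        simp at hpos
      obtain ⟨g, -, hg⟩ := exists_dual_vector ℝ (y - x) (norm_ne_zero_iff.mpr hne)
      have hgpos : 0 < g (y - x) := by
        rw [hg]; exact norm_pos_iff.mpr hne
      have hxq : (x, g) ∈ qpolar T := key x hx g
      have := hQ (x, g) hxq (y, y') hy'
      simp only [qrel] at this
      rcases min_le_iff.mp this with h | h
      · exact absurd h (not_le.mpr hgpos)
      · exact absurd h (not_le.mpr hpos)
    · intro hx
      exact hE x hx
  exact ⟨heq, heq ▸ hsing⟩
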